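/- Let π : E → G be a surjective group homomorphism with kernel A. Then there exists a dynamical 2-cocycle α on the core quandle Core(G) with values in the set A such that α_{x,x}(s,t) = t·s⁻¹·t for all x ∈ G and s,t ∈ A, together with a bijection Ψ : E → G×A satisfying Ψ(b·a⁻¹·b) = Ψ(a) * Ψ(b) for all a,b ∈ E, where * is the operation of the extension quandle Core(G) ×_α A; that is, Core(E) is isomorphic as a quandle to Core(G) ×_α A, and on each fiber {x}×A the induced quandle operation is the core operation of the group A. -/

import Mathlib

/-- A dynamical 2-cocycle on a quandle `(X, op)` with values in a set `S`. -/
def IsDynCocycle {X S : Type*} (op : X → X → X) (α : X → X → S → S → S) : Prop :=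
  (∀ (x : X) (s : S), α x x s s = s) ∧
  (∀ (x y : X) (t : S), Function.Bijective (fun s => α x y s t)) ∧
  (∀ (x y z : X) (s t u : S),
    α (op x y) z (α x y s t) u = α (op x z) (op y z) (α x z s u) (α y z t u))

theorem stmt15 {E G : Type*} [Group E] [Group G]
    (π : E →* G) (hπ : Function.Surjective π) :
    ∃ α : G → G → π.ker → π.ker → π.ker,
      -- α is a dynamical 2-cocycle on the core quandle Core(G)
      IsDynCocycle (fun x y : G => y * x⁻¹ * y) α ∧
      -- on each fiber the induced operation is the core operation of A
      (∀ (x : G) (s t : π.ker), α x x s t = t * s⁻¹ * t) ∧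
      -- Core(E) ≅ Core(G) ×_α A
      ∃ Ψ : E → G × π.ker, Function.Bijective Ψ ∧
        ∀ a b : E,
          Ψ (b * a⁻¹ * b) =
            ((Ψ b).1 * (Ψ a).1⁻¹ * (Ψ b).1,
              α (Ψ a).1 (Ψ b).1 (Ψ a).2 (Ψ b).2) := by
  classical
  set σ : G → E := Function.surjInv hπ with hσdef
  have hσ : ∀ g, π (σ g) = g := fun g => Function.surjInv_eq hπ g
  -- the section Φ and the "fiber coordinate" Ψ2
  set Φ : G → π.ker → E := fun x s => σ x * (s : E) with hΦdef
  have hπΦ : ∀ (x : G) (s : π.ker), π (Φ x s) = x := by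
    intro x s
    have hs : π (s : E) = 1 := s.2
    simp [hΦdef, hσ, hs]
  have hmem : ∀ e : E, (σ (π e))⁻¹ * e ∈ π.ker := by
    intro e
    simp [MonoidHom.mem_ker, hσ]
  set Ψ2 : E → π.ker := fun e => ⟨(σ (π e))⁻¹ * e, hmem e⟩ with hΨ2def
  have hΦΨ : ∀ e : E, Φ (π e) (Ψ2 e) = e := by
    intro e; simp [hΦdef, hΨ2def]
  have hΦΨ' : ∀ (w : G) (e : E), π e = w → Φ w (Ψ2 e) = e := by
    intro w e h; rw [← h]; exact hΦΨ e
  have hΨΦ : ∀ (x : G) (s : π.ker), Ψ2 (Φ x s) = s := by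
    intro x s
    apply Subtype.ext
    simp [hΨ2def, hπΦ x s, hΦdef, hσ, (MonoidHom.mem_ker).mp s.2]
  set α : G → G → π.ker → π.ker → π.ker :=
    fun x y s t => Ψ2 (Φ y t * (Φ x s)⁻¹ * Φ y t) with hαdef
  have hπd : ∀ a b : E, π (b * a⁻¹ * b) = π b * (π a)⁻¹ * π b := by
    intro a b; simp
  have hπcore : ∀ (x y : G) (s t : π.ker),
      π (Φ y t * (Φ x s)⁻¹ * Φ y t) = y * x⁻¹ * y := by
    intro x y s t
    rw [hπd, hπΦ, hπΦ]
  have key : ∀ a b : E, Ψ2 (b * a⁻¹ * b) = α (π a) (π b) (Ψ2 a) (Ψ2 b) := by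
    intro a b
    simp only [hαdef, hΦΨ]
  refine ⟨α, ⟨?_, ?_, ?_⟩, ?_, ⟨fun e => (π e, Ψ2 e), ?_, ?_⟩⟩
  · -- idempotence
    intro x s
    have : Φ x s * (Φ x s)⁻¹ * Φ x s = Φ x s := by group
    simp only [hαdef, this, hΨΦ]
  · -- bijectivity in first coordinate
    intro x y t
    rw [Function.bijective_iff_has_inverse]
    refine ⟨fun r => Ψ2 (Φ y t * (Φ (y * x⁻¹ * y) r)⁻¹ * Φ y t), ?_, ?_⟩
    · intro s
      have h1 : Φ (y * x⁻¹ * y) (α x y s t) = Φ y t * (Φ x s)⁻¹ * Φ y t := by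
        simp only [hαdef]
        exact hΦΨ' _ _ (hπcore x y s t)
      simp only [h1]
      have h2 : Φ y t * (Φ y t * (Φ x s)⁻¹ * Φ y t)⁻¹ * Φ y t = Φ x s := by group
      rw [h2, hΨΦ]
    · intro r
      have h1 : Φ x (Ψ2 (Φ y t * (Φ (y * x⁻¹ * y) r)⁻¹ * Φ y t)) =
          Φ y t * (Φ (y * x⁻¹ * y) r)⁻¹ * Φ y t := by
        apply hΦΨ'
        rw [hπd, hπΦ, hπΦ]; group
      simp only [hαdef, h1]
      have h2 : Φ y t * (Φ y t * (Φ (y * x⁻¹ * y) r)⁻¹ * Φ y t)⁻¹ * Φ y t =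
          Φ (y * x⁻¹ * y) r := by group
      rw [h2, hΨΦ]
  · -- cocycle condition
    intro x y z s t u
    have hab : Φ (y * x⁻¹ * y) (α x y s t) = Φ y t * (Φ x s)⁻¹ * Φ y t :=
      hΦΨ' _ _ (hπcore x y s t)
    have hac : Φ (z * x⁻¹ * z) (α x z s u) = Φ z u * (Φ x s)⁻¹ * Φ z u :=
      hΦΨ' _ _ (hπcore x z s u)
    have hbc : Φ (z * y⁻¹ * z) (α y z t u) = Φ z u * (Φ y t)⁻¹ * Φ z u :=
      hΦΨ' _ _ (hπcore y z t u)
    simp only [hαdef] at hab hac hbc ⊢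
    rw [hab, hac, hbc]
    congr 1
    group
  · -- fiber operation
    intro x s t
    apply Subtype.ext
    have h1 : π (Φ x t * (Φ x s)⁻¹ * Φ x t) = x := by
      rw [hπd, hπΦ, hπΦ]; group
    simp only [hαdef, hΨ2def, h1]
    simp only [hΦdef]
    push_cast
    group
  · -- bijectivity of Ψ
    rw [Function.bijective_iff_has_inverse]
    refine ⟨fun p => Φ p.1 p.2, ?_, ?_⟩
    · intro e; exact hΦΨ e
    · intro p
      ext
      · exact hπΦ p.1 p.2
      · exact congrArg Subtype.val (hΨΦ p.1 p.2)
  · -- quandle morphism property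
    intro a b
    refine Prod.ext ?_ ?_
    · exact hπd a b
    · exact key a b
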